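/- Define P̂_n ∈ ℤ[X] by P̂_n = ∑_{d | n, d odd, r_n(d) ≥ 0} F_{r_n(d)} − ∑_{d | n, d odd, r_n(d) < 0} F_{−r_n(d) − 1}, where r_n(d) = n/d − (d+1)/2. Then in the Laurent polynomial ring, (q−1)²·q^{n−1}·(P̂_n evaluated at q + q^{−1}) · q^{−(n-1)} · q^{−1} equals ∑_{d | n, d odd} (q^{n/d − (d−1)/2} + q^{−n/d + (d−1)/2} − q^{n/d − (d+1)/2} − q^{−n/d + (d+1)/2}); that is, q^{−1}(q−1)²·P̂_n(q + q^{−1}) equals the displayed divisor sum. -/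
import Mathlib

open Polynomial LaurentPolynomial

noncomputable def TT : ℕ → ℤ[X]
  | 0 => 2
  | 1 => Polynomial.X
  | (k+2) => Polynomial.X * TT (k+1) - TT k

noncomputable def F (n : ℕ) : ℤ[X] := 1 + ∑ k ∈ Finset.Icc 1 n, TT k

def r (n d : ℕ) : ℤ := ((n / d : ℕ) : ℤ) - (((d + 1) / 2 : ℕ) : ℤ)

noncomputable def Phat (n : ℕ) : ℤ[X] :=
  (∑ d ∈ n.divisors.filter (fun d => Odd d ∧ 0 ≤ r n d), F (r n d).toNat) -
  (∑ d ∈ n.divisors.filter (fun d => Odd d ∧ r n d < 0), F (-(r n d) - 1).toNat)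

lemma mul_T (a b : ℤ) : (T a : LaurentPolynomial ℤ) * T b = T (a + b) :=
  (T_add a b).symm

lemma aeval_TT : ∀ k : ℕ,
    Polynomial.aeval (T 1 + T (-1) : LaurentPolynomial ℤ) (TT k) = T (k : ℤ) + T (-(k : ℤ))
  | 0 => by
    show Polynomial.aeval (T 1 + T (-1) : LaurentPolynomial ℤ) (2 : ℤ[X]) = _
    rw [map_ofNat]
    norm_num [T_zero]
  | 1 => by simp [TT]
  | (k+2) => by
    rw [TT]
    simp only [map_sub, map_mul, aeval_X, aeval_TT (k+1), aeval_TT k]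
    simp only [add_mul, mul_add, mul_T]
    push_cast
    ring_nf

noncomputable def H (x : ℤ) : LaurentPolynomial ℤ :=
  T (x + 1) - T x - T (-x) + T (-x - 1)

lemma H_neg (x : ℤ) : H (-x - 1) = - H x := by
  simp only [H]
  ring_nf

lemma key (m : ℕ) :
    T (-1) * (T 1 - 1) ^ 2 *
      Polynomial.aeval (T 1 + T (-1) : LaurentPolynomial ℤ) (F m) = H (m : ℤ) := by
  induction m with
  | zero =>
    simp only [F, Finset.Icc_self, H]
    norm_num
    simp only [sub_sq, mul_one, one_pow, mul_sub, mul_add, mul_T, sub_mul, add_mul, one_mul,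
      mul_one, sq, T_zero]
    ring_nf
    rw [T_zero]
    ring
  | succ m ih =>
    have hF : F (m + 1) = F m + TT (m + 1) := by
      rw [F, F, Finset.sum_Icc_succ_top (by omega : 1 ≤ m + 1)]
      ring
    rw [hF, map_add, mul_add, ih, aeval_TT (m + 1)]
    simp only [H]
    simp only [sub_sq, one_pow, mul_sub, mul_add, mul_T, sub_mul, add_mul, one_mul,
      mul_one, sq, T_zero]
    push_cast
    ring_nf
theorem stmt_15 (n : ℕ) (hn : 1 ≤ n) :
    LaurentPolynomial.T (-1) * (LaurentPolynomial.T 1 - 1) ^ 2 *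
        Polynomial.aeval
          (LaurentPolynomial.T 1 + LaurentPolynomial.T (-1) : LaurentPolynomial ℤ) (Phat n)
      = ∑ d ∈ n.divisors.filter (fun d => Odd d),
          (LaurentPolynomial.T (((n / d : ℕ) : ℤ) - (((d - 1) / 2 : ℕ) : ℤ)) +
           LaurentPolynomial.T (-((n / d : ℕ) : ℤ) + (((d - 1) / 2 : ℕ) : ℤ)) -
           LaurentPolynomial.T (((n / d : ℕ) : ℤ) - (((d + 1) / 2 : ℕ) : ℤ)) -
           LaurentPolynomial.T (-((n / d : ℕ) : ℤ) + (((d + 1) / 2 : ℕ) : ℤ))) := by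
  have hterm : ∀ d ∈ n.divisors.filter (fun d => Odd d),
      (T (((n / d : ℕ) : ℤ) - (((d - 1) / 2 : ℕ) : ℤ)) +
       T (-((n / d : ℕ) : ℤ) + (((d - 1) / 2 : ℕ) : ℤ)) -
       T (((n / d : ℕ) : ℤ) - (((d + 1) / 2 : ℕ) : ℤ)) -
       T (-((n / d : ℕ) : ℤ) + (((d + 1) / 2 : ℕ) : ℤ)) : LaurentPolynomial ℤ)
      = H (r n d) := by
    intro d hd
    simp only [Finset.mem_filter] at hd
    obtain ⟨k, hk⟩ := hd.2
    have h1 : ((d - 1) / 2 : ℕ) = k := by omega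
    have h2 : ((d + 1) / 2 : ℕ) = k + 1 := by omega
    rw [h1, h2, H, r, h2]
    push_cast
    ring_nf
  rw [Finset.sum_congr rfl hterm]
  rw [Phat, map_sub, mul_sub, map_sum, map_sum, Finset.mul_sum, Finset.mul_sum]
  have e1 : n.divisors.filter (fun d => Odd d ∧ 0 ≤ r n d)
      = (n.divisors.filter (fun d => Odd d)).filter (fun d => 0 ≤ r n d) := by
    rw [Finset.filter_filter]
  have e2 : n.divisors.filter (fun d => Odd d ∧ r n d < 0)
      = (n.divisors.filter (fun d => Odd d)).filter (fun d => ¬ 0 ≤ r n d) := by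
    rw [Finset.filter_filter]
    apply Finset.filter_congr
    intro d _
    simp [not_le]
  rw [e1, e2,
    ← Finset.sum_filter_add_sum_filter_not (n.divisors.filter (fun d => Odd d))
      (fun d => 0 ≤ r n d) (fun d => H (r n d))]
  rw [sub_eq_add_neg, ← Finset.sum_neg_distrib]
  congr 1
  · apply Finset.sum_congr rfl
    intro d hd
    simp only [Finset.mem_filter] at hd
    rw [key]
    congr 1
    exact Int.toNat_of_nonneg hd.2
  · apply Finset.sum_congr rfl
    intro d hd
    simp only [Finset.mem_filter, not_le] at hd
    rw [key]
    have : ((-(r n d) - 1).toNat : ℤ) = -(r n d) - 1 := Int.toNat_of_nonneg (by omega)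
    rw [this, H_neg, neg_neg]
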